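/- For every natural number n, the number of permutations of length n in the juxtaposition class Av(231|21) equals the number of permutations of length n in the juxtaposition class Av(321|21). (There is a bijection ψ : Av(231|21) → Av(321|21).) -/

import Mathlib

/-- `σ` contains an occurrence of the pattern `π` using only positions in `S`. -/
def ContainsIn {n m : ℕ} (σ : Equiv.Perm (Fin n)) (π : Equiv.Perm (Fin m))
    (S : Set (Fin n)) : Prop :=
  ∃ f : Fin m → Fin n, StrictMono f ∧ (∀ s, f s ∈ S) ∧
    ∀ s t : Fin m, σ (f s) < σ (f t) ↔ π s < π t

/-- `σ` contains an occurrence of the pattern `π`. -/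
def Contains {n m : ℕ} (σ : Equiv.Perm (Fin n)) (π : Equiv.Perm (Fin m)) : Prop :=
  ContainsIn σ π Set.univ

/-- `σ` avoids the pattern `π`. -/
def Avoids {n m : ℕ} (σ : Equiv.Perm (Fin n)) (π : Equiv.Perm (Fin m)) : Prop :=
  ¬ Contains σ π

/-- `σ` lies in the juxtaposition class `Av(P|Q)`: positions split at some cut `k`
(`0 ≤ k ≤ n`), no occurrence of `P` within the first `k` positions and no occurrence
of `Q` within the remaining positions. -/
def JuxtAv {n p q : ℕ} (P : Equiv.Perm (Fin p)) (Q : Equiv.Perm (Fin q))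
    (σ : Equiv.Perm (Fin n)) : Prop :=
  ∃ k ≤ n, ¬ ContainsIn σ P {i : Fin n | (i : ℕ) < k} ∧
    ¬ ContainsIn σ Q {i : Fin n | k ≤ (i : ℕ)}

noncomputable def p231 : Equiv.Perm (Fin 3) :=
  Equiv.ofBijective (![1,2,0] : Fin 3 → Fin 3) (by decide)

noncomputable def p321 : Equiv.Perm (Fin 3) :=
  Equiv.ofBijective (![2,1,0] : Fin 3 → Fin 3) (by decide)

noncomputable def p21 : Equiv.Perm (Fin 2) :=
  Equiv.ofBijective (![1,0] : Fin 2 → Fin 2) (by decide)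

open Equiv Finset

variable {n k m : ℕ}

lemma lt_iff_flip {N M : ℕ} {x y : Fin N} {u v : Fin M} (hxy : x ≠ y) (huv : u ≠ v)
    (h : x < y ↔ u < v) : y < x ↔ v < u := by
  constructor
  · intro hy
    rcases huv.lt_or_gt with hu | hu
    · exact absurd (h.mpr hu) (asymm hy)
    · exact hu
  · intro hv
    rcases hxy.lt_or_gt with hx | hx
    · exact absurd (h.mp hx) (asymm hv)
    · exact hx

lemma containsIn_three_iff (σ : Perm (Fin n)) (π : Perm (Fin 3)) (S : Set (Fin n)) :
    ContainsIn σ π S ↔ ∃ a b c : Fin n, a < b ∧ b < c ∧ a ∈ S ∧ b ∈ S ∧ c ∈ S ∧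
      (σ a < σ b ↔ π 0 < π 1) ∧ (σ a < σ c ↔ π 0 < π 2) ∧ (σ b < σ c ↔ π 1 < π 2) := by
  constructor
  · rintro ⟨f, hmono, hmem, hiff⟩
    exact ⟨f 0, f 1, f 2, hmono (by decide), hmono (by decide), hmem 0, hmem 1, hmem 2,
      hiff 0 1, hiff 0 2, hiff 1 2⟩
  · rintro ⟨a, b, c, hab, hbc, ha, hb, hc, h01, h02, h12⟩
    have h10 := lt_iff_flip (σ.injective.ne hab.ne) (π.injective.ne (by decide)) h01
    have h20 := lt_iff_flip (σ.injective.ne (hab.trans hbc).ne) (π.injective.ne (by decide)) h02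
    have h21 := lt_iff_flip (σ.injective.ne hbc.ne) (π.injective.ne (by decide)) h12
    refine ⟨![a,b,c], ?_, ?_, ?_⟩
    · intro s t hst
      fin_cases s <;> fin_cases t <;>
        simp_all <;> first | exact hab | exact hbc | exact hab.trans hbc
    · intro s; fin_cases s <;> assumption
    · intro s t
      fin_cases s <;> fin_cases t <;> simp_all


lemma p21_vals : p21 0 = 1 ∧ p21 1 = 0 := by constructor <;> rfl
lemma p231_vals : p231 0 = 1 ∧ p231 1 = 2 ∧ p231 2 = 0 := by
  refine ⟨rfl, rfl, rfl⟩
lemma p321_vals : p321 0 = 2 ∧ p321 1 = 1 ∧ p321 2 = 0 := by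
  refine ⟨rfl, rfl, rfl⟩

lemma containsIn_two_iff (σ : Perm (Fin n)) (S : Set (Fin n)) :
    ContainsIn σ p21 S ↔ ∃ a b : Fin n, a < b ∧ a ∈ S ∧ b ∈ S ∧ σ b < σ a := by
  have hv : ¬ (p21 0 < p21 1) := by rw [p21_vals.1, p21_vals.2]; decide
  constructor
  · rintro ⟨f, hmono, hmem, hiff⟩
    have hab : f 0 < f 1 := hmono (by decide)
    refine ⟨f 0, f 1, hab, hmem 0, hmem 1, ?_⟩
    have h01 : ¬ σ (f 0) < σ (f 1) := fun h => hv ((hiff 0 1).mp h)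
    rcases (σ.injective.ne hab.ne).lt_or_gt with h | h
    · exact absurd h h01
    · exact h
  · rintro ⟨a, b, hab, ha, hb, hba⟩
    refine ⟨![a,b], ?_, ?_, ?_⟩
    · intro s t hst
      fin_cases s <;> fin_cases t <;> simp_all
    · intro s; fin_cases s <;> assumption
    · intro s t
      have h10 : p21 1 < p21 0 := by rw [p21_vals.1, p21_vals.2]; decide
      fin_cases s <;> fin_cases t <;>
        simp_all [asymm hba, lt_irrefl, not_lt_of_gt]

lemma containsIn_p231_iff (σ : Perm (Fin n)) (S : Set (Fin n)) :
    ContainsIn σ p231 S ↔ ∃ a b c : Fin n, a < b ∧ b < c ∧ a ∈ S ∧ b ∈ S ∧ c ∈ S ∧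
      σ a < σ b ∧ σ c < σ a := by
  rw [containsIn_three_iff]
  obtain ⟨e0, e1, e2⟩ := p231_vals
  constructor
  · rintro ⟨a, b, c, hab, hbc, ha, hb, hc, h01, h02, h12⟩
    refine ⟨a, b, c, hab, hbc, ha, hb, hc, h01.mpr (by rw [e0, e1]; decide), ?_⟩
    have : ¬ σ a < σ c := fun h => by rw [e0, e2] at h02; exact absurd (h02.mp h) (by decide)
    rcases (σ.injective.ne (hab.trans hbc).ne).lt_or_gt with h | h
    · exact absurd h this
    · exact h
  · rintro ⟨a, b, c, hab, hbc, ha, hb, hc, h1, h2⟩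
    refine ⟨a, b, c, hab, hbc, ha, hb, hc, ?_, ?_, ?_⟩
    · rw [e0, e1]; simp [h1]
    · rw [e0, e2]; simp [asymm h2]
    · rw [e1, e2]; simp [asymm (h2.trans h1)]

lemma containsIn_p321_iff (σ : Perm (Fin n)) (S : Set (Fin n)) :
    ContainsIn σ p321 S ↔ ∃ a b c : Fin n, a < b ∧ b < c ∧ a ∈ S ∧ b ∈ S ∧ c ∈ S ∧
      σ b < σ a ∧ σ c < σ b := by
  rw [containsIn_three_iff]
  obtain ⟨e0, e1, e2⟩ := p321_vals
  constructor
  · rintro ⟨a, b, c, hab, hbc, ha, hb, hc, h01, h02, h12⟩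
    have hba : ¬ σ a < σ b := fun h => by rw [e0, e1] at h01; exact absurd (h01.mp h) (by decide)
    have hcb : ¬ σ b < σ c := fun h => by rw [e1, e2] at h12; exact absurd (h12.mp h) (by decide)
    refine ⟨a, b, c, hab, hbc, ha, hb, hc, ?_, ?_⟩
    · rcases (σ.injective.ne hab.ne).lt_or_gt with h | h
      · exact absurd h hba
      · exact h
    · rcases (σ.injective.ne hbc.ne).lt_or_gt with h | h
      · exact absurd h hcb
      · exact h
  · rintro ⟨a, b, c, hab, hbc, ha, hb, hc, h1, h2⟩
    refine ⟨a, b, c, hab, hbc, ha, hb, hc, ?_, ?_, ?_⟩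
    · rw [e0, e1]; simp [asymm h1]
    · rw [e0, e2]; simp [asymm (h2.trans h1)]
    · rw [e1, e2]; simp [asymm h2]

lemma containsIn_mono {σ : Perm (Fin n)} {π : Perm (Fin m)} {S T : Set (Fin n)}
    (h : ContainsIn σ π S) (hST : S ⊆ T) : ContainsIn σ π T := by
  obtain ⟨f, h1, h2, h3⟩ := h
  exact ⟨f, h1, fun s => hST (h2 s), h3⟩

/-- suffix of σ starting at position k is increasing -/
def SufInc (σ : Perm (Fin n)) (k : ℕ) : Prop :=
  ∀ i j : Fin n, k ≤ (i : ℕ) → i < j → σ i < σ j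

lemma sufInc_iff_not21 (σ : Perm (Fin n)) (k : ℕ) :
    SufInc σ k ↔ ¬ ContainsIn σ p21 {i : Fin n | k ≤ (i : ℕ)} := by
  rw [containsIn_two_iff]
  constructor
  · rintro h ⟨a, b, hab, ha, hb, hba⟩
    exact absurd (h a b ha hab) (asymm hba)
  · intro h i j hi hij
    rcases (σ.injective.ne hij.ne).lt_or_gt with hlt | hlt
    · exact hlt
    · exact absurd ⟨i, j, hij, hi, le_trans hi (le_of_lt hij), hlt⟩ h

open Classical in
lemma sufInc_exists (σ : Perm (Fin n)) : ∃ k, SufInc σ k :=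
  ⟨n, fun i _ hi _ => absurd hi (not_le.mpr i.isLt)⟩

open scoped Classical in
/-- minimal cut with increasing suffix -/
noncomputable def Kcut (σ : Perm (Fin n)) : ℕ := Nat.find (sufInc_exists σ)

lemma sufInc_mono {σ : Perm (Fin n)} {k k' : ℕ} (h : SufInc σ k) (hkk : k ≤ k') :
    SufInc σ k' := fun i j hi hij => h i j (le_trans hkk hi) hij

open scoped Classical in
lemma sufInc_iff_Kcut_le {σ : Perm (Fin n)} {k : ℕ} : SufInc σ k ↔ Kcut σ ≤ k :=
  ⟨fun h => Nat.find_le h, fun h => sufInc_mono (Nat.find_spec (sufInc_exists σ)) h⟩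

lemma Kcut_le (σ : Perm (Fin n)) : Kcut σ ≤ n :=
  sufInc_iff_Kcut_le.mp (fun i _ hi _ => absurd hi (not_le.mpr i.isLt))

lemma juxtAv_iff {P : Perm (Fin 3)} (σ : Perm (Fin n)) :
    JuxtAv P p21 σ ↔ ¬ ContainsIn σ P {i : Fin n | (i : ℕ) < Kcut σ} := by
  constructor
  · rintro ⟨k, hk, h1, h2⟩
    have hKk : Kcut σ ≤ k := sufInc_iff_Kcut_le.mp ((sufInc_iff_not21 σ k).mpr h2)
    intro hc
    exact h1 (containsIn_mono hc (fun i hi => lt_of_lt_of_le hi hKk))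
  · intro h
    exact ⟨Kcut σ, Kcut_le σ, h,
      ((sufInc_iff_not21 σ _).mp (sufInc_iff_Kcut_le.mpr le_rfl))⟩

/-- append `v` as the last entry, shifting old values via `succAbove` -/
noncomputable def extP (w : Perm (Fin k)) (v : Fin (k+1)) : Perm (Fin (k+1)) :=
  Equiv.ofBijective (fun i => if h : (i : ℕ) < k then v.succAbove (w ⟨i, h⟩) else v)
    (by
      rw [Finite.injective_iff_bijective.symm]
      intro i j hij
      simp only at hij
      split_ifs at hij with hi hj hj
      · exact Fin.ext (by
          have := w.injective (Fin.succAbove_right_injective hij)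
          exact congrArg Fin.val this ▸ rfl)
      · exact absurd hij (Fin.succAbove_ne v _)
      · exact absurd hij.symm (Fin.succAbove_ne v _)
      · exact Fin.ext (by omega))

lemma extP_apply_lt (w : Perm (Fin k)) (v : Fin (k+1)) (i : Fin (k+1)) (h : (i : ℕ) < k) :
    extP w v i = v.succAbove (w ⟨i, h⟩) := by
  simp [extP, Equiv.ofBijective, h]

lemma extP_apply_last (w : Perm (Fin k)) (v : Fin (k+1)) :
    extP w v (Fin.last k) = v := by
  simp [extP, Equiv.ofBijective]

lemma extP_injective : Function.Injective
    (fun x : Perm (Fin k) × Fin (k+1) => extP x.1 x.2) := by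
  rintro ⟨w, v⟩ ⟨w', v'⟩ h
  simp only at h
  have hv : v = v' := by
    rw [← extP_apply_last w v, ← extP_apply_last w' v', h]
  subst hv
  have hw : w = w' := by
    apply Equiv.ext
    intro i
    have h2 : extP w v (Fin.castSucc i) = extP w' v (Fin.castSucc i) := by rw [h]
    rw [extP_apply_lt w v _ (by simp), extP_apply_lt w' v _ (by simp)] at h2
    have h3 := Fin.succAbove_right_injective h2
    simpa using h3
  simp [hw]

lemma extP_surjective : Function.Surjective
    (fun x : Perm (Fin k) × Fin (k+1) => extP x.1 x.2) := by
  have : Function.Bijective (fun x : Perm (Fin k) × Fin (k+1) => extP x.1 x.2) := by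
    rw [Fintype.bijective_iff_injective_and_card]
    refine ⟨extP_injective, ?_⟩
    simp [Fintype.card_perm, Nat.factorial_succ, Nat.mul_comm]
  exact this.2

lemma card_last_eq (Q : Perm (Fin (k+1)) → Prop) (v : Fin (k+1)) :
    Nat.card {σ : Perm (Fin (k+1)) // Q σ ∧ σ (Fin.last k) = v}
      = Nat.card {w : Perm (Fin k) // Q (extP w v)} := by
  refine (Nat.card_congr (Equiv.ofBijective
    (fun x : {w : Perm (Fin k) // Q (extP w v)} =>
      (⟨extP x.1 v, x.2, extP_apply_last x.1 v⟩ :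
        {σ : Perm (Fin (k+1)) // Q σ ∧ σ (Fin.last k) = v})) ⟨?_, ?_⟩)).symm
  · rintro ⟨w, hw⟩ ⟨w', hw'⟩ h
    simp only [Subtype.mk.injEq] at h
    have h2 : (fun x : Perm (Fin k) × Fin (k+1) => extP x.1 x.2) (w, v)
        = (fun x : Perm (Fin k) × Fin (k+1) => extP x.1 x.2) (w', v) := h
    have := extP_injective h2
    simpa using congrArg Prod.fst this
  · rintro ⟨σ, hσ, hlast⟩
    obtain ⟨⟨w, v'⟩, hw⟩ := extP_surjective σ
    simp only at hw
    have hv : v' = v := by rw [← hlast, ← hw, extP_apply_last]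
    subst hv; subst hw
    exact ⟨⟨w, hσ⟩, rfl⟩

open scoped Classical in
lemma ncard_fiber {α : Type*} [Fintype α] (p : α → Prop) (g : α → ℕ) (s : Finset ℕ)
    (h : ∀ a, p a → g a ∈ s) :
    Nat.card {a // p a} = ∑ r ∈ s, Nat.card {a // p a ∧ g a = r} := by
  simp_rw [Nat.card_eq_fintype_card, Fintype.card_subtype]
  rw [Finset.card_eq_sum_card_fiberwise (f := g) (t := s) (fun a ha => h a (by simpa using ha))]
  refine Finset.sum_congr rfl (fun r _ => ?_)
  congr 1
  rw [Finset.filter_filter]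

open scoped Classical in
lemma ncard_or_disjoint {α : Type*} [Fintype α] (p q : α → Prop)
    (h : ∀ a, p a → q a → False) :
    Nat.card {a // p a ∨ q a} = Nat.card {a // p a} + Nat.card {a // q a} := by
  simp_rw [Nat.card_eq_fintype_card, Fintype.card_subtype]
  rw [Finset.filter_or, Finset.card_union_of_disjoint]
  rw [Finset.disjoint_filter]
  intro a _ hp hq
  exact h a (by simpa using hp) (by simpa using hq)

lemma ncard_congr_iff {α : Type*} {p q : α → Prop} (h : ∀ a, p a ↔ q a) :
    Nat.card {a // p a} = Nat.card {a // q a} := by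
  have : p = q := funext (fun a => propext (h a))
  rw [this]

lemma succAbove_lt_succAbove {v : Fin (k+1)} {a b : Fin k} :
    v.succAbove a < v.succAbove b ↔ a < b := Fin.succAbove_lt_succAbove_iff

lemma containsIn_extP_iff (w : Perm (Fin k)) (v : Fin (k+1)) (π : Perm (Fin m)) (t : ℕ)
    (ht : t ≤ k) :
    ContainsIn (extP w v) π {i : Fin (k+1) | (i : ℕ) < t}
      ↔ ContainsIn w π {i : Fin k | (i : ℕ) < t} := by
  constructor
  · rintro ⟨f, hmono, hmem, hiff⟩
    refine ⟨fun s => ⟨f s, lt_of_lt_of_le (hmem s) ht⟩, ?_, ?_, ?_⟩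
    · intro s t hst
      exact hmono hst
    · intro s
      exact hmem s
    · intro s t
      have es : ∀ s, extP w v (f s) = v.succAbove (w ⟨f s, lt_of_lt_of_le (hmem s) ht⟩) := by
        intro s
        rw [extP_apply_lt w v (f s) (lt_of_lt_of_le (hmem s) ht)]
      rw [← hiff s t, es s, es t, succAbove_lt_succAbove]
  · rintro ⟨f, hmono, hmem, hiff⟩
    refine ⟨fun s => Fin.castSucc (f s), ?_, ?_, ?_⟩
    · intro s t hst
      exact Fin.castSucc_lt_castSucc_iff.mpr (hmono hst)
    · intro s
      simpa using hmem s
    · intro s t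
      have es : ∀ s, extP w v (Fin.castSucc (f s)) = v.succAbove (w (f s)) := by
        intro s
        rw [extP_apply_lt w v _ (by simp)]
        rfl
      rw [es s, es t, succAbove_lt_succAbove, hiff s t]

lemma avoids_iff_not_containsIn_univ {σ : Perm (Fin n)} {π : Perm (Fin m)} :
    Avoids σ π ↔ ¬ ContainsIn σ π {i : Fin n | (i : ℕ) < n} := by
  unfold Avoids Contains
  constructor
  · intro h hc
    exact h (containsIn_mono hc (fun i _ => Set.mem_univ i))
  · intro h hc
    exact h (containsIn_mono hc (fun i _ => i.isLt))

lemma succAbove_lt_self_iff {v : Fin (k+1)} {u : Fin k} :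
    v.succAbove u < v ↔ (u : ℕ) < (v : ℕ) := by
  rw [Fin.succAbove_lt_iff_castSucc_lt, Fin.lt_iff_val_lt_val]
  rfl

lemma sufInc_extP (w : Perm (Fin (k+1))) (v : Fin (k+2)) (t : ℕ) (ht : t ≤ k) :
    SufInc (extP w v) t ↔ SufInc w t ∧ (w (Fin.last k) : ℕ) < (v : ℕ) := by
  constructor
  · intro h
    constructor
    · intro i j hi hij
      have := h (Fin.castSucc i) (Fin.castSucc j) (by simpa using hi)
        (Fin.castSucc_lt_castSucc_iff.mpr hij)
      rw [extP_apply_lt w v _ (by simpa using i.isLt), extP_apply_lt w v _ (by simpa using j.isLt)] at this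
      have := succAbove_lt_succAbove.mp this
      simpa using this
    · have := h (Fin.castSucc (Fin.last k)) (Fin.last (k+1))
        (by simpa using ht) (Fin.castSucc_lt_last _)
      rw [extP_apply_lt w v _ (by simp), extP_apply_last] at this
      have := succAbove_lt_self_iff.mp this
      exact this
  · rintro ⟨hw, hv⟩ i j hi hij
    by_cases hj : (j : ℕ) < k + 1
    · have hik : (i : ℕ) < k + 1 := lt_trans hij hj
      rw [extP_apply_lt w v i hik, extP_apply_lt w v j hj]
      exact succAbove_lt_succAbove.mpr (hw ⟨i, hik⟩ ⟨j, hj⟩ hi hij)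
    · have hj' : j = Fin.last (k+1) := Fin.ext (by have := j.isLt; simp only [Fin.val_last]; omega)
      subst hj'
      have hik : (i : ℕ) < k + 1 := by
        have := hij
        simp [Fin.lt_iff_val_lt_val] at this
        omega
      rw [extP_apply_lt w v i hik, extP_apply_last]
      rw [succAbove_lt_self_iff]
      have : w ⟨i, hik⟩ ≤ w (Fin.last k) := by
        rcases eq_or_lt_of_le (Fin.le_last (⟨i, hik⟩ : Fin (k+1))) with he | hl
        · rw [he]
        · exact le_of_lt (hw _ _ hi hl)
      have h2 : (w ⟨i, hik⟩ : ℕ) ≤ (w (Fin.last k) : ℕ) := this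
      omega

lemma Kcut_perm_le (w : Perm (Fin (k+1))) : Kcut w ≤ k :=
  sufInc_iff_Kcut_le.mp (fun i j hi hij => by
    have : (j : ℕ) < k + 1 := j.isLt
    have : (i : ℕ) < (j : ℕ) := hij
    omega)

lemma Kcut_extP_high (w : Perm (Fin (k+1))) (v : Fin (k+2))
    (hv : (w (Fin.last k) : ℕ) < (v : ℕ)) : Kcut (extP w v) = Kcut w := by
  have h1 : Kcut (extP w v) ≤ Kcut w :=
    sufInc_iff_Kcut_le.mp ((sufInc_extP w v _ (Kcut_perm_le w)).mpr
      ⟨sufInc_iff_Kcut_le.mpr le_rfl, hv⟩)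
  have h2 : Kcut w ≤ Kcut (extP w v) :=
    sufInc_iff_Kcut_le.mp ((sufInc_extP w v _ (le_trans h1 (Kcut_perm_le w))).mp
      (sufInc_iff_Kcut_le.mpr le_rfl)).1
  omega

lemma Kcut_extP_low (w : Perm (Fin (k+1))) (v : Fin (k+2))
    (hv : (v : ℕ) ≤ (w (Fin.last k) : ℕ)) : Kcut (extP w v) = k + 1 := by
  have h1 : Kcut (extP w v) ≤ k + 1 := Kcut_perm_le _
  by_contra h
  have h2 : Kcut (extP w v) ≤ k := by omega
  have := ((sufInc_extP w v _ h2).mp (sufInc_iff_Kcut_le.mpr le_rfl)).2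
  omega

lemma juxtAv_extP (P : Perm (Fin 3)) (w : Perm (Fin (k+1))) (v : Fin (k+2)) :
    JuxtAv P p21 (extP w v) ↔
      ((w (Fin.last k) : ℕ) < (v : ℕ) ∧ JuxtAv P p21 w) ∨
      ((v : ℕ) ≤ (w (Fin.last k) : ℕ) ∧ Avoids w P) := by
  rw [juxtAv_iff, juxtAv_iff]
  by_cases h : (w (Fin.last k) : ℕ) < (v : ℕ)
  · rw [Kcut_extP_high w v h,
      containsIn_extP_iff w v P (Kcut w) (le_trans (Kcut_perm_le w) (by omega))]
    have h' : ¬ ((v : ℕ) ≤ (w (Fin.last k) : ℕ)) := not_le.mpr h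
    tauto
  · rw [Kcut_extP_low w v (not_lt.mp h),
      containsIn_extP_iff w v P (k+1) le_rfl]
    rw [show ¬ ContainsIn w P {i : Fin (k+1) | (i : ℕ) < k + 1} ↔ Avoids w P from
      avoids_iff_not_containsIn_univ.symm]
    have h' := not_lt.mp h
    tauto

/-! ### threshold statistics -/

noncomputable def c231 (w : Perm (Fin k)) : ℕ :=
  Finset.sup Finset.univ (fun p : Fin k × Fin k =>
    if p.1 < p.2 ∧ w p.1 < w p.2 then (w p.1 : ℕ) + 1 else 0)

noncomputable def c321 (w : Perm (Fin k)) : ℕ :=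
  Finset.sup Finset.univ (fun p : Fin k × Fin k =>
    if p.1 < p.2 ∧ w p.2 < w p.1 then (w p.2 : ℕ) + 1 else 0)

lemma c231_le_iff {w : Perm (Fin k)} {m : ℕ} :
    c231 w ≤ m ↔ ∀ i j : Fin k, i < j → w i < w j → (w i : ℕ) < m := by
  rw [c231, Finset.sup_le_iff]
  constructor
  · intro h i j hij hw
    have := h (i, j) (Finset.mem_univ _)
    simp only [] at this
    rw [if_pos ⟨hij, hw⟩] at this
    omega
  · intro h p _
    split_ifs with hp
    · exact h p.1 p.2 hp.1 hp.2
    · omega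

lemma c321_le_iff {w : Perm (Fin k)} {m : ℕ} :
    c321 w ≤ m ↔ ∀ i j : Fin k, i < j → w j < w i → (w j : ℕ) < m := by
  rw [c321, Finset.sup_le_iff]
  constructor
  · intro h i j hij hw
    have := h (i, j) (Finset.mem_univ _)
    simp only [] at this
    rw [if_pos ⟨hij, hw⟩] at this
    omega
  · intro h p _
    split_ifs with hp
    · exact h p.1 p.2 hp.1 hp.2
    · omega

lemma c231_lower {w : Perm (Fin k)} {i j : Fin k} (hij : i < j) (hw : w i < w j) :
    (w i : ℕ) + 1 ≤ c231 w := by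
  have := Finset.le_sup (f := fun p : Fin k × Fin k =>
    if p.1 < p.2 ∧ w p.1 < w p.2 then (w p.1 : ℕ) + 1 else 0) (Finset.mem_univ (i, j))
  simp only [] at this
  rw [if_pos ⟨hij, hw⟩] at this
  exact this

lemma c321_lower {w : Perm (Fin k)} {i j : Fin k} (hij : i < j) (hw : w j < w i) :
    (w j : ℕ) + 1 ≤ c321 w := by
  have := Finset.le_sup (f := fun p : Fin k × Fin k =>
    if p.1 < p.2 ∧ w p.2 < w p.1 then (w p.2 : ℕ) + 1 else 0) (Finset.mem_univ (i, j))
  simp only [] at this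
  rw [if_pos ⟨hij, hw⟩] at this
  exact this

lemma c231_le_card (w : Perm (Fin k)) : c231 w ≤ k := by
  rw [c231_le_iff]
  intro i j _ _
  exact (w i).isLt

lemma c321_le_card (w : Perm (Fin k)) : c321 w ≤ k := by
  rw [c321_le_iff]
  intro i j _ _
  exact (w j).isLt

lemma succAbove_val_of_lt {v : Fin (k+1)} {u : Fin k} (h : (u : ℕ) < (v : ℕ)) :
    (v.succAbove u : ℕ) = (u : ℕ) := by
  rw [Fin.succAbove_of_castSucc_lt _ _ (by rwa [Fin.lt_iff_val_lt_val])]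
  rfl

lemma succAbove_val_of_ge {v : Fin (k+1)} {u : Fin k} (h : (v : ℕ) ≤ (u : ℕ)) :
    (v.succAbove u : ℕ) = (u : ℕ) + 1 := by
  rw [Fin.succAbove_of_le_castSucc _ _ (by rwa [Fin.le_iff_val_le_val])]
  rfl

lemma lt_succAbove_self_iff {v : Fin (k+1)} {u : Fin k} :
    v < v.succAbove u ↔ (v : ℕ) ≤ (u : ℕ) := by
  rw [Fin.lt_succAbove_iff_le_castSucc, Fin.le_iff_val_le_val]
  rfl

lemma univ_eq_lt_card : {i : Fin k | (i : ℕ) < k} = (Set.univ : Set (Fin k)) := by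
  ext i; simp [i.isLt]

lemma avoids_extP_231 (w : Perm (Fin k)) (v : Fin (k+1)) :
    Avoids (extP w v) p231 ↔ Avoids w p231 ∧ c231 w ≤ (v : ℕ) := by
  constructor
  · intro hav
    constructor
    · intro hcont
      have hc' : ContainsIn w p231 {i : Fin k | (i : ℕ) < k} := by
        rw [univ_eq_lt_card]; exact hcont
      exact hav (containsIn_mono ((containsIn_extP_iff w v p231 k le_rfl).mpr hc')
        (fun i _ => Set.mem_univ i))
    · rw [c231_le_iff]
      intro i j hij hw
      by_contra hge
      push_neg at hge
      apply hav
      rw [Contains, containsIn_p231_iff]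
      refine ⟨Fin.castSucc i, Fin.castSucc j, Fin.last k,
        Fin.castSucc_lt_castSucc_iff.mpr hij, Fin.castSucc_lt_last _,
        Set.mem_univ _, Set.mem_univ _, Set.mem_univ _, ?_, ?_⟩
      · rw [extP_apply_lt w v _ (by simp), extP_apply_lt w v _ (by simp)]
        exact succAbove_lt_succAbove.mpr hw
      · rw [extP_apply_last, extP_apply_lt w v _ (by simp)]
        exact lt_succAbove_self_iff.mpr hge
  · rintro ⟨hav, hc⟩ hcont
    rw [Contains, containsIn_p231_iff] at hcont
    obtain ⟨a, b, c, hab, hbc, -, -, -, h1, h2⟩ := hcont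
    by_cases hck : (c : ℕ) < k
    · have hbk : (b : ℕ) < k := lt_trans hbc hck
      have hak : (a : ℕ) < k := lt_trans hab hbk
      rw [extP_apply_lt w v a hak, extP_apply_lt w v b hbk] at h1
      rw [extP_apply_lt w v c hck, extP_apply_lt w v a hak] at h2
      apply hav
      rw [Contains, containsIn_p231_iff]
      exact ⟨⟨a, hak⟩, ⟨b, hbk⟩, ⟨c, hck⟩, hab, hbc, Set.mem_univ _, Set.mem_univ _,
        Set.mem_univ _, succAbove_lt_succAbove.mp h1, succAbove_lt_succAbove.mp h2⟩
    · have hcl : c = Fin.last k := Fin.ext (by have := c.isLt; simp only [Fin.val_last]; omega)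
      subst hcl
      have hbk : (b : ℕ) < k := by
        have h3 := hbc
        rw [Fin.lt_iff_val_lt_val] at h3
        simpa using h3
      have hak : (a : ℕ) < k := lt_trans hab hbk
      rw [extP_apply_lt w v a hak, extP_apply_lt w v b hbk] at h1
      rw [extP_apply_last, extP_apply_lt w v a hak] at h2
      have hasc : w ⟨a, hak⟩ < w ⟨b, hbk⟩ := succAbove_lt_succAbove.mp h1
      have hge : (v : ℕ) ≤ (w ⟨a, hak⟩ : ℕ) := lt_succAbove_self_iff.mp h2
      have := c231_le_iff.mp hc ⟨a, hak⟩ ⟨b, hbk⟩ hab hasc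
      omega

lemma avoids_extP_321 (w : Perm (Fin k)) (v : Fin (k+1)) :
    Avoids (extP w v) p321 ↔ Avoids w p321 ∧ c321 w ≤ (v : ℕ) := by
  constructor
  · intro hav
    constructor
    · intro hcont
      have hc' : ContainsIn w p321 {i : Fin k | (i : ℕ) < k} := by
        rw [univ_eq_lt_card]; exact hcont
      exact hav (containsIn_mono ((containsIn_extP_iff w v p321 k le_rfl).mpr hc')
        (fun i _ => Set.mem_univ i))
    · rw [c321_le_iff]
      intro i j hij hw
      by_contra hge
      push_neg at hge
      apply hav
      rw [Contains, containsIn_p321_iff]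
      refine ⟨Fin.castSucc i, Fin.castSucc j, Fin.last k,
        Fin.castSucc_lt_castSucc_iff.mpr hij, Fin.castSucc_lt_last _,
        Set.mem_univ _, Set.mem_univ _, Set.mem_univ _, ?_, ?_⟩
      · rw [extP_apply_lt w v _ (by simp), extP_apply_lt w v _ (by simp)]
        exact succAbove_lt_succAbove.mpr hw
      · rw [extP_apply_last, extP_apply_lt w v _ (by simp)]
        exact lt_succAbove_self_iff.mpr hge
  · rintro ⟨hav, hc⟩ hcont
    rw [Contains, containsIn_p321_iff] at hcont
    obtain ⟨a, b, c, hab, hbc, -, -, -, h1, h2⟩ := hcont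
    by_cases hck : (c : ℕ) < k
    · have hbk : (b : ℕ) < k := lt_trans hbc hck
      have hak : (a : ℕ) < k := lt_trans hab hbk
      rw [extP_apply_lt w v a hak, extP_apply_lt w v b hbk] at h1
      rw [extP_apply_lt w v c hck, extP_apply_lt w v b hbk] at h2
      apply hav
      rw [Contains, containsIn_p321_iff]
      exact ⟨⟨a, hak⟩, ⟨b, hbk⟩, ⟨c, hck⟩, hab, hbc, Set.mem_univ _, Set.mem_univ _,
        Set.mem_univ _, succAbove_lt_succAbove.mp h1, succAbove_lt_succAbove.mp h2⟩
    · have hcl : c = Fin.last k := Fin.ext (by have := c.isLt; simp only [Fin.val_last]; omega)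
      subst hcl
      have hbk : (b : ℕ) < k := by
        have h3 := hbc
        rw [Fin.lt_iff_val_lt_val] at h3
        simpa using h3
      have hak : (a : ℕ) < k := lt_trans hab hbk
      rw [extP_apply_lt w v a hak, extP_apply_lt w v b hbk] at h1
      rw [extP_apply_last, extP_apply_lt w v b hbk] at h2
      have hdesc : w ⟨b, hbk⟩ < w ⟨a, hak⟩ := succAbove_lt_succAbove.mp h1
      have hge : (v : ℕ) ≤ (w ⟨b, hbk⟩ : ℕ) := lt_succAbove_self_iff.mp h2
      have := c321_le_iff.mp hc ⟨a, hak⟩ ⟨b, hbk⟩ hab hdesc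
      omega

lemma extP_mem_cases (i : Fin (k+1)) : (i : ℕ) < k ∨ i = Fin.last k := by
  rcases lt_or_ge (i : ℕ) k with h | h
  · exact Or.inl h
  · exact Or.inr (Fin.ext (by have := i.isLt; simp only [Fin.val_last]; omega))

lemma c231_extP (w : Perm (Fin k)) (v : Fin (k+1)) (h : c231 w ≤ (v : ℕ)) :
    c231 (extP w v) = (v : ℕ) := by
  apply le_antisymm
  · rw [c231_le_iff]
    intro i j hij hw
    rcases extP_mem_cases j with hj | hj
    · have hi : (i : ℕ) < k := lt_trans hij hj
      rw [extP_apply_lt w v i hi, extP_apply_lt w v j hj] at hw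
      rw [extP_apply_lt w v i hi]
      have hasc := succAbove_lt_succAbove.mp hw
      have hlt : (w ⟨i, hi⟩ : ℕ) < (v : ℕ) := c231_le_iff.mp h _ _ hij hasc
      rw [succAbove_val_of_lt hlt]
      exact hlt
    · subst hj
      rw [extP_apply_last] at hw
      exact hw
  · rcases Nat.eq_zero_or_pos (v : ℕ) with h0 | h0
    · omega
    · have hvk : (v : ℕ) - 1 < k := by have := v.isLt; omega
      set u : Fin k := w.symm ⟨(v : ℕ) - 1, hvk⟩ with hu
      have hwu : (w u : ℕ) = (v : ℕ) - 1 := by rw [hu, Equiv.apply_symm_apply]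
      have hlow : extP w v (Fin.castSucc u) = Fin.castSucc (w u) := by
        rw [extP_apply_lt w v _ (by simp)]
        exact Fin.succAbove_of_castSucc_lt _ _ (by rw [Fin.lt_iff_val_lt_val]; show (w u : ℕ) < (v : ℕ); omega)
      have hasc : extP w v (Fin.castSucc u) < extP w v (Fin.last k) := by
        rw [hlow, extP_apply_last, Fin.lt_iff_val_lt_val]
        show (w u : ℕ) < (v : ℕ)
        omega
      have := c231_lower (Fin.castSucc_lt_last u) hasc
      rw [hlow] at this
      simp [hwu] at this
      omega

lemma c321_extP (w : Perm (Fin k)) (v : Fin (k+1)) (h : c321 w ≤ (v : ℕ)) :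
    c321 (extP w v) = if (v : ℕ) = k then c321 w else (v : ℕ) + 1 := by
  split_ifs with hv
  · -- v is the new maximum, descents unchanged
    apply le_antisymm
    · rw [c321_le_iff]
      intro i j hij hw
      rcases extP_mem_cases j with hj | hj
      · have hi : (i : ℕ) < k := lt_trans hij hj
        rw [extP_apply_lt w v i hi, extP_apply_lt w v j hj] at hw
        rw [extP_apply_lt w v j hj]
        have hdesc := succAbove_lt_succAbove.mp hw
        have hlt : (w ⟨j, hj⟩ : ℕ) < (v : ℕ) := by
          have := c321_le_iff.mp h _ _ hij hdesc
          have := (w ⟨j, hj⟩).isLt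
          omega
        rw [succAbove_val_of_lt hlt]
        have := c321_lower (show (⟨(i : ℕ), hi⟩ : Fin k) < ⟨(j : ℕ), hj⟩ from hij) hdesc
        omega
      · subst hj
        rw [extP_apply_last] at hw
        exfalso
        have : (extP w v i : ℕ) < k + 1 := (extP w v i).isLt
        rw [Fin.lt_iff_val_lt_val] at hw
        omega
    · rw [c321_le_iff]
      intro i j hij hw
      have hlow : ∀ (a : Fin k), extP w v (Fin.castSucc a) = Fin.castSucc (w a) := by
        intro a
        rw [extP_apply_lt w v _ (by simp)]
        exact Fin.succAbove_of_castSucc_lt _ _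
          (by rw [Fin.lt_iff_val_lt_val]; have := (w a).isLt; simp; omega)
      have hd : extP w v (Fin.castSucc j) < extP w v (Fin.castSucc i) := by
        rw [hlow i, hlow j]
        exact Fin.castSucc_lt_castSucc_iff.mpr hw
      have := c321_lower (Fin.castSucc_lt_castSucc_iff.mpr hij) hd
      rw [hlow j] at this
      simpa using this
  · -- v < k : new descent bottom v
    have hvk : (v : ℕ) < k := by have := v.isLt; omega
    apply le_antisymm
    · rw [c321_le_iff]
      intro i j hij hw
      rcases extP_mem_cases j with hj | hj
      · have hi : (i : ℕ) < k := lt_trans hij hj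
        rw [extP_apply_lt w v i hi, extP_apply_lt w v j hj] at hw
        rw [extP_apply_lt w v j hj]
        have hdesc := succAbove_lt_succAbove.mp hw
        have hlt : (w ⟨j, hj⟩ : ℕ) < (v : ℕ) := c321_le_iff.mp h _ _ hij hdesc
        rw [succAbove_val_of_lt hlt]
        omega
      · subst hj
        rw [extP_apply_last]
        omega
    · set u : Fin k := w.symm ⟨(v : ℕ), hvk⟩ with hu
      have hwu : (w u : ℕ) = (v : ℕ) := by rw [hu, Equiv.apply_symm_apply]
      have hhigh : (extP w v (Fin.castSucc u) : ℕ) = (v : ℕ) + 1 := by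
        rw [extP_apply_lt w v _ (by simp)]
        have : (w ⟨((Fin.castSucc u) : ℕ), by simp⟩ : ℕ) = (v : ℕ) := hwu
        rw [succAbove_val_of_ge (by omega)]
        omega
      have hdesc : extP w v (Fin.last k) < extP w v (Fin.castSucc u) := by
        rw [extP_apply_last, Fin.lt_iff_val_lt_val, hhigh]
        omega
      have := c321_lower (Fin.castSucc_lt_last u) hdesc
      rw [extP_apply_last] at this
      omega

/-! ### counting -/

noncomputable def F231 (k c : ℕ) : ℕ := Nat.card {w : Perm (Fin k) // Avoids w p231 ∧ c231 w = c}
noncomputable def F321 (k c : ℕ) : ℕ := Nat.card {w : Perm (Fin k) // Avoids w p321 ∧ c321 w = c}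
noncomputable def G231 (k m : ℕ) : ℕ := Nat.card {w : Perm (Fin k) // Avoids w p231 ∧ c231 w ≤ m}
noncomputable def G321 (k m : ℕ) : ℕ := Nat.card {w : Perm (Fin k) // Avoids w p321 ∧ c321 w ≤ m}

lemma ncard_empty_pred {α : Type*} [Fintype α] {p : α → Prop} (h : ∀ a, ¬ p a) :
    Nat.card {a // p a} = 0 := by
  rw [ncard_congr_iff (q := fun _ => False) (fun a => ⟨h a, False.elim⟩)]
  simp [Nat.card_eq_fintype_card]

lemma G231_sum (k m : ℕ) : G231 k m = ∑ c ∈ Finset.range (m+1), F231 k c := by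
  rw [G231, ncard_fiber _ (fun w => c231 w) (Finset.range (m+1))
    (fun w hw => Finset.mem_range.mpr (Nat.lt_succ_of_le hw.2))]
  refine Finset.sum_congr rfl (fun r hr => ?_)
  rw [Finset.mem_range] at hr
  refine ncard_congr_iff (fun w => ⟨fun h => ⟨h.1.1, h.2⟩, fun h => ⟨⟨h.1, ?_⟩, h.2⟩⟩)
  have := h.2
  omega

lemma G321_sum (k m : ℕ) : G321 k m = ∑ c ∈ Finset.range (m+1), F321 k c := by
  rw [G321, ncard_fiber _ (fun w => c321 w) (Finset.range (m+1))
    (fun w hw => Finset.mem_range.mpr (Nat.lt_succ_of_le hw.2))]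
  refine Finset.sum_congr rfl (fun r hr => ?_)
  rw [Finset.mem_range] at hr
  refine ncard_congr_iff (fun w => ⟨fun h => ⟨h.1.1, h.2⟩, fun h => ⟨⟨h.1, ?_⟩, h.2⟩⟩)
  have := h.2
  omega

open scoped Classical in
lemma ncard_perm_succ_fiber (Q : Perm (Fin (k+1)) → Prop) :
    Nat.card {σ : Perm (Fin (k+1)) // Q σ}
      = ∑ v : Fin (k+1), Nat.card {w : Perm (Fin k) // Q (extP w v)} := by
  have hb : Function.Bijective
      (fun x : Σ v : Fin (k+1), {w : Perm (Fin k) // Q (extP w v)} =>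
        (⟨extP x.2.1 x.1, x.2.2⟩ : {σ : Perm (Fin (k+1)) // Q σ})) := by
    constructor
    · rintro ⟨v, w, hw⟩ ⟨v', w', hw'⟩ h
      simp only [Subtype.mk.injEq] at h
      have h2 : (fun x : Perm (Fin k) × Fin (k+1) => extP x.1 x.2) (w, v)
          = (fun x : Perm (Fin k) × Fin (k+1) => extP x.1 x.2) (w', v') := h
      have := extP_injective h2
      have hv : v = v' := congrArg Prod.snd this
      subst hv
      have hw2 : w = w' := congrArg Prod.fst this
      subst hw2
      rfl
    · rintro ⟨σ, hσ⟩
      obtain ⟨⟨w, v⟩, hw⟩ := extP_surjective σ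
      simp only at hw
      subst hw
      exact ⟨⟨v, w, hσ⟩, rfl⟩
  rw [Nat.card_congr (Equiv.ofBijective _ hb).symm]
  simp_rw [Nat.card_eq_fintype_card]
  exact Fintype.card_sigma

lemma F231_rec (k c : ℕ) : F231 (k+1) c = if c ≤ k then G231 k c else 0 := by
  rw [F231, ncard_perm_succ_fiber]
  have hsummand : ∀ v : Fin (k+1),
      Nat.card {w : Perm (Fin k) // Avoids (extP w v) p231 ∧ c231 (extP w v) = c}
        = if (v : ℕ) = c then G231 k (v : ℕ) else 0 := by
    intro v
    by_cases hv : (v : ℕ) = c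
    · rw [if_pos hv, G231]
      apply ncard_congr_iff
      intro w
      constructor
      · rintro ⟨ha, _⟩
        exact (avoids_extP_231 w v).mp ha
      · rintro ⟨h1, h2⟩
        exact ⟨(avoids_extP_231 w v).mpr ⟨h1, h2⟩, by rw [c231_extP w v h2, hv]⟩
    · rw [if_neg hv]
      apply ncard_empty_pred
      rintro w ⟨ha, hc⟩
      obtain ⟨h1, h2⟩ := (avoids_extP_231 w v).mp ha
      rw [c231_extP w v h2] at hc
      exact hv hc
  rw [Finset.sum_congr rfl (fun v _ => hsummand v)]
  rw [Fin.sum_univ_eq_sum_range (fun r => if r = c then G231 k r else 0) (k+1)]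
  rw [Finset.sum_ite_eq' (Finset.range (k+1)) c (fun r => G231 k r)]
  simp [Nat.lt_succ_iff]

lemma F321_rec (k c : ℕ) :
    F321 (k+1) c = F321 k c + (if 1 ≤ c ∧ c ≤ k then G321 k (c-1) else 0) := by
  rw [F321, ncard_perm_succ_fiber]
  have hsummand : ∀ v : Fin (k+1),
      Nat.card {w : Perm (Fin k) // Avoids (extP w v) p321 ∧ c321 (extP w v) = c}
        = if (v : ℕ) = k then F321 k c else (if (v : ℕ) + 1 = c then G321 k (v : ℕ) else 0) := by
    intro v
    by_cases hv : (v : ℕ) = k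
    · rw [if_pos hv, F321]
      apply ncard_congr_iff
      intro w
      constructor
      · rintro ⟨ha, hc⟩
        obtain ⟨h1, h2⟩ := (avoids_extP_321 w v).mp ha
        rw [c321_extP w v h2, if_pos hv] at hc
        exact ⟨h1, hc⟩
      · rintro ⟨h1, h2⟩
        have hle : c321 w ≤ (v : ℕ) := by rw [hv]; exact c321_le_card w
        exact ⟨(avoids_extP_321 w v).mpr ⟨h1, hle⟩, by rw [c321_extP w v hle, if_pos hv, h2]⟩
    · rw [if_neg hv]
      by_cases hc : (v : ℕ) + 1 = c
      · rw [if_pos hc, G321]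
        apply ncard_congr_iff
        intro w
        constructor
        · rintro ⟨ha, _⟩
          exact (avoids_extP_321 w v).mp ha
        · rintro ⟨h1, h2⟩
          exact ⟨(avoids_extP_321 w v).mpr ⟨h1, h2⟩,
            by rw [c321_extP w v h2, if_neg hv, hc]⟩
      · rw [if_neg hc]
        apply ncard_empty_pred
        rintro w ⟨ha, hcc⟩
        obtain ⟨h1, h2⟩ := (avoids_extP_321 w v).mp ha
        rw [c321_extP w v h2, if_neg hv] at hcc
        exact hc hcc
  rw [Finset.sum_congr rfl (fun v _ => hsummand v)]
  rw [Fin.sum_univ_eq_sum_range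
    (fun r => if r = k then F321 k c else (if r + 1 = c then G321 k r else 0)) (k+1)]
  rw [Finset.sum_range_succ, if_pos rfl]
  have hrest : ∑ r ∈ Finset.range k,
      (if r = k then F321 k c else (if r + 1 = c then G321 k r else 0))
        = if 1 ≤ c ∧ c ≤ k then G321 k (c-1) else 0 := by
    by_cases h : 1 ≤ c ∧ c ≤ k
    · rw [Finset.sum_congr rfl (fun r hr => ?_), Finset.sum_ite_eq' (Finset.range k) (c-1)
        (fun r => G321 k r), if_pos (Finset.mem_range.mpr (by omega))]
      · rw [if_pos h]
      · rw [if_neg (by rw [Finset.mem_range] at hr; omega)]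
        exact if_congr (by omega) rfl rfl
    · rw [if_neg h, Finset.sum_eq_zero]
      intro r hr
      rw [Finset.mem_range] at hr
      rw [if_neg (by omega), if_neg (by omega)]
  rw [hrest]
  omega

lemma F_base (c : ℕ) :
    F231 0 c = (if c = 0 then 1 else 0) ∧ F321 0 c = (if c = 0 then 1 else 0) := by
  have hav : ∀ (P : Perm (Fin 3)) (w : Perm (Fin 0)), Avoids w P := by
    intro P w hcont
    obtain ⟨f, -, -, -⟩ := hcont
    exact (f 0).elim0
  have hc1 : ∀ w : Perm (Fin 0), c231 w = 0 := by
    intro w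
    rw [← Nat.le_zero, c231_le_iff]
    intro i
    exact i.elim0
  have hc2 : ∀ w : Perm (Fin 0), c321 w = 0 := by
    intro w
    rw [← Nat.le_zero, c321_le_iff]
    intro i
    exact i.elim0
  constructor <;> [rw [F231]; rw [F321]] <;> by_cases hc : c = 0
  · rw [if_pos hc]
    rw [ncard_congr_iff (q := fun _ => True) (fun w => by simp [hav, hc1, hc])]
    simp [Nat.card_eq_fintype_card]
  · rw [if_neg hc]
    exact ncard_empty_pred (fun w ⟨_, h⟩ => hc (by rw [hc1] at h; omega))
  · rw [if_pos hc]
    rw [ncard_congr_iff (q := fun _ => True) (fun w => by simp [hav, hc2, hc])]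
    simp [Nat.card_eq_fintype_card]
  · rw [if_neg hc]
    exact ncard_empty_pred (fun w ⟨_, h⟩ => hc (by rw [hc2] at h; omega))

lemma F321_zero_of_gt {k c : ℕ} (h : k < c) : F321 k c = 0 := by
  apply ncard_empty_pred
  rintro w ⟨-, hc⟩
  have := c321_le_card w
  omega

lemma F_eq : ∀ k c, F231 k c = F321 k c := by
  intro k
  induction k with
  | zero => intro c; rw [(F_base c).1, (F_base c).2]
  | succ k ih =>
    intro c
    have hG : ∀ m, G231 k m = G321 k m := by
      intro m
      rw [G231_sum, G321_sum]
      exact Finset.sum_congr rfl (fun c _ => ih c)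
    rw [F231_rec, F321_rec]
    by_cases h1 : c ≤ k
    · rw [if_pos h1]
      by_cases h2 : 1 ≤ c
      · rw [if_pos ⟨h2, h1⟩, hG c, G321_sum, G321_sum,
          show c - 1 + 1 = c from by omega, Finset.sum_range_succ]
        omega
      · have hc0 : c = 0 := by omega
        subst hc0
        rw [if_neg (by omega), hG 0, G321_sum, Finset.sum_range_one]
        omega
    · rw [if_neg h1, if_neg (by omega), F321_zero_of_gt (by omega)]

lemma G_eq (k m : ℕ) : G231 k m = G321 k m := by
  rw [G231_sum, G321_sum]
  exact Finset.sum_congr rfl (fun c _ => F_eq k c)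

noncomputable def HP (P : Perm (Fin 3)) (k r : ℕ) : ℕ :=
  Nat.card {σ : Perm (Fin (k+1)) // Avoids σ P ∧ (σ (Fin.last k) : ℕ) = r}

noncomputable def CLP (P : Perm (Fin 3)) (k r : ℕ) : ℕ :=
  Nat.card {σ : Perm (Fin (k+1)) // JuxtAv P p21 σ ∧ (σ (Fin.last k) : ℕ) = r}

lemma HP_rec_231 (k r : ℕ) : HP p231 k r = if r ≤ k then G231 k r else 0 := by
  rw [HP, ncard_perm_succ_fiber (Q := fun σ => Avoids σ p231 ∧ (σ (Fin.last k) : ℕ) = r)]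
  have hsummand : ∀ v : Fin (k+1),
      Nat.card {w : Perm (Fin k) //
        Avoids (extP w v) p231 ∧ ((extP w v) (Fin.last k) : ℕ) = r}
      = if (v : ℕ) = r then G231 k (v : ℕ) else 0 := by
    intro v
    by_cases hv : (v : ℕ) = r
    · rw [if_pos hv, G231]
      refine ncard_congr_iff (fun w => ⟨fun h => (avoids_extP_231 w v).mp h.1,
        fun h => ⟨(avoids_extP_231 w v).mpr h, by rw [extP_apply_last]; exact hv⟩⟩)
    · rw [if_neg hv]
      exact ncard_empty_pred (fun w h => hv (by rw [← h.2, extP_apply_last]))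
  rw [Finset.sum_congr rfl (fun v _ => hsummand v)]
  rw [Fin.sum_univ_eq_sum_range (fun t => if t = r then G231 k t else 0) (k+1)]
  rw [Finset.sum_ite_eq' (Finset.range (k+1)) r (fun t => G231 k t)]
  simp [Nat.lt_succ_iff]

lemma HP_rec_321 (k r : ℕ) : HP p321 k r = if r ≤ k then G321 k r else 0 := by
  rw [HP, ncard_perm_succ_fiber (Q := fun σ => Avoids σ p321 ∧ (σ (Fin.last k) : ℕ) = r)]
  have hsummand : ∀ v : Fin (k+1),
      Nat.card {w : Perm (Fin k) //
        Avoids (extP w v) p321 ∧ ((extP w v) (Fin.last k) : ℕ) = r}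
      = if (v : ℕ) = r then G321 k (v : ℕ) else 0 := by
    intro v
    by_cases hv : (v : ℕ) = r
    · rw [if_pos hv, G321]
      refine ncard_congr_iff (fun w => ⟨fun h => (avoids_extP_321 w v).mp h.1,
        fun h => ⟨(avoids_extP_321 w v).mpr h, by rw [extP_apply_last]; exact hv⟩⟩)
    · rw [if_neg hv]
      exact ncard_empty_pred (fun w h => hv (by rw [← h.2, extP_apply_last]))
  rw [Finset.sum_congr rfl (fun v _ => hsummand v)]
  rw [Fin.sum_univ_eq_sum_range (fun t => if t = r then G321 k t else 0) (k+1)]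
  rw [Finset.sum_ite_eq' (Finset.range (k+1)) r (fun t => G321 k t)]
  simp [Nat.lt_succ_iff]

lemma HP_eq (k r : ℕ) : HP p231 k r = HP p321 k r := by
  rw [HP_rec_231, HP_rec_321]
  by_cases h : r ≤ k
  · rw [if_pos h, if_pos h, G_eq]
  · rw [if_neg h, if_neg h]

open scoped Classical in
lemma CLP_rec (P : Perm (Fin 3)) (k r : ℕ) :
    CLP P (k+1) r = if r ≤ k + 1 then
        ((∑ t ∈ Finset.range (k+1), if t < r then CLP P k t else 0)
          + (∑ t ∈ Finset.range (k+1), if r ≤ t then HP P k t else 0))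
      else 0 := by
  rw [CLP, ncard_perm_succ_fiber (Q := fun σ => JuxtAv P p21 σ ∧ (σ (Fin.last (k+1)) : ℕ) = r)]
  set C : ℕ := (∑ t ∈ Finset.range (k+1), if t < r then CLP P k t else 0)
      + (∑ t ∈ Finset.range (k+1), if r ≤ t then HP P k t else 0) with hC
  have hsummand : ∀ v : Fin (k+2),
      Nat.card {w : Perm (Fin (k+1)) //
        JuxtAv P p21 (extP w v) ∧ ((extP w v) (Fin.last (k+1)) : ℕ) = r}
      = if (v : ℕ) = r then C else 0 := by
    intro v
    by_cases hv : (v : ℕ) = r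
    · rw [if_pos hv, hC]
      have hcongr : ∀ w : Perm (Fin (k+1)),
          (JuxtAv P p21 (extP w v) ∧ ((extP w v) (Fin.last (k+1)) : ℕ) = r)
          ↔ (((w (Fin.last k) : ℕ) < r ∧ JuxtAv P p21 w)
              ∨ (r ≤ (w (Fin.last k) : ℕ) ∧ Avoids w P)) := by
        intro w
        rw [extP_apply_last, juxtAv_extP, hv]
        tauto
      rw [ncard_congr_iff hcongr]
      rw [ncard_or_disjoint _ _ (fun w h1 h2 => by omega)]
      congr 1
      · rw [ncard_fiber _ (fun w => (w (Fin.last k) : ℕ)) (Finset.range (k+1))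
          (fun w _ => Finset.mem_range.mpr (w (Fin.last k)).isLt)]
        refine Finset.sum_congr rfl (fun t ht => ?_)
        by_cases htr : t < r
        · rw [if_pos htr, CLP]
          exact ncard_congr_iff (fun w => ⟨fun h => ⟨h.1.2, h.2⟩,
            fun h => ⟨⟨by omega, h.1⟩, h.2⟩⟩)
        · rw [if_neg htr]
          exact ncard_empty_pred (fun w h => htr (by omega))
      · rw [ncard_fiber _ (fun w => (w (Fin.last k) : ℕ)) (Finset.range (k+1))
          (fun w _ => Finset.mem_range.mpr (w (Fin.last k)).isLt)]
        refine Finset.sum_congr rfl (fun t ht => ?_)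
        by_cases htr : r ≤ t
        · rw [if_pos htr, HP]
          exact ncard_congr_iff (fun w => ⟨fun h => ⟨h.1.2, h.2⟩,
            fun h => ⟨⟨by omega, h.1⟩, h.2⟩⟩)
        · rw [if_neg htr]
          exact ncard_empty_pred (fun w h => htr (by omega))
    · rw [if_neg hv]
      exact ncard_empty_pred (fun w h => hv (by rw [← h.2, extP_apply_last]))
  rw [Finset.sum_congr rfl (fun v _ => hsummand v)]
  rw [Fin.sum_univ_eq_sum_range (fun t => if t = r then C else 0) (k+2)]
  rw [Finset.sum_ite_eq' (Finset.range (k+2)) r (fun _ => C)]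
  simp [Nat.lt_succ_iff]

lemma juxtAv_perm_one (P : Perm (Fin 3)) (σ : Perm (Fin 1)) : JuxtAv P p21 σ := by
  refine ⟨0, by omega, ?_, ?_⟩
  · rintro ⟨f, -, hmem, -⟩
    have := hmem 0
    simp at this
  · rintro ⟨f, hmono, -, -⟩
    have h01 := hmono (show (0 : Fin 2) < 1 by decide)
    have h0 := (f 0).isLt
    have h1 := (f 1).isLt
    rw [Fin.lt_iff_val_lt_val] at h01
    omega

lemma CLP_base (P : Perm (Fin 3)) (r : ℕ) : CLP P 0 r = if r = 0 then 1 else 0 := by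
  rw [CLP]
  have hlast : ∀ σ : Perm (Fin 1), (σ (Fin.last 0) : ℕ) = 0 := fun σ => by
    have := (σ (Fin.last 0)).isLt
    omega
  by_cases hr : r = 0
  · rw [if_pos hr]
    rw [ncard_congr_iff (q := fun _ => True)
      (fun σ => by simp [juxtAv_perm_one, hlast, hr])]
    simp [Nat.card_eq_fintype_card]
  · rw [if_neg hr]
    exact ncard_empty_pred (fun σ h => hr (by rw [← h.2, hlast]))

lemma CLP_eq : ∀ k r, CLP p231 k r = CLP p321 k r := by
  intro k
  induction k with
  | zero =>
    intro r
    rw [CLP_base, CLP_base]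
  | succ k ih =>
    intro r
    rw [CLP_rec, CLP_rec]
    by_cases h : r ≤ k + 1
    · rw [if_pos h, if_pos h]
      congr 1
      · exact Finset.sum_congr rfl (fun t _ => by
          by_cases ht : t < r
          · rw [if_pos ht, if_pos ht, ih t]
          · rw [if_neg ht, if_neg ht])
      · exact Finset.sum_congr rfl (fun t _ => by
          by_cases ht : r ≤ t
          · rw [if_pos ht, if_pos ht, HP_eq]
          · rw [if_neg ht, if_neg ht])
    · rw [if_neg h, if_neg h]

theorem stmt (n : ℕ) :
    Nat.card {σ : Equiv.Perm (Fin n) // JuxtAv p231 p21 σ}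
      = Nat.card {σ : Equiv.Perm (Fin n) // JuxtAv p321 p21 σ} := by
  cases n with
  | zero =>
    have hall : ∀ (P : Perm (Fin 3)) (σ : Perm (Fin 0)), JuxtAv P p21 σ := by
      intro P σ
      refine ⟨0, le_rfl, ?_, ?_⟩
      · rintro ⟨f, -, -, -⟩
        exact (f 0).elim0
      · rintro ⟨f, -, -, -⟩
        exact (f 0).elim0
    rw [ncard_congr_iff (p := fun σ : Perm (Fin 0) => JuxtAv p231 p21 σ)
        (q := fun _ => True) (fun σ => by simp [hall]),
      ncard_congr_iff (p := fun σ : Perm (Fin 0) => JuxtAv p321 p21 σ)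
        (q := fun _ => True) (fun σ => by simp [hall])]
  | succ k =>
    rw [ncard_fiber (fun σ : Perm (Fin (k+1)) => JuxtAv p231 p21 σ)
        (fun σ => (σ (Fin.last k) : ℕ)) (Finset.range (k+1))
        (fun σ _ => Finset.mem_range.mpr (σ (Fin.last k)).isLt),
      ncard_fiber (fun σ : Perm (Fin (k+1)) => JuxtAv p321 p21 σ)
        (fun σ => (σ (Fin.last k) : ℕ)) (Finset.range (k+1))
        (fun σ _ => Finset.mem_range.mpr (σ (Fin.last k)).isLt)]
    exact Finset.sum_congr rfl (fun r _ => CLP_eq k r)
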